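/- For the saturated double integrator closed-loop system ẋ₁ = x₂, ẋ₂ = −sat_L(k_p x₁ + k_d x₂)/I with k_p, k_d, I, L > 0, the origin is globally asymptotically stable; in particular every trajectory converges to 0. -/

import Mathlib

open Real Filter Set

noncomputable def sat (L y : ℝ) : ℝ := if |y| ≤ L then y else L * Real.sign y

lemma sat_eq_clamp {L : ℝ} (hL : 0 ≤ L) (y : ℝ) : sat L y = max (-L) (min L y) := by
  unfold sat
  rcases le_or_gt (|y|) L with h | h
  · rw [if_pos h]
    rw [abs_le] at h
    rw [min_eq_right h.2, max_eq_right h.1]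
  · rw [if_neg (not_le.2 h)]
    rcases le_or_gt y 0 with hy | hy
    · have hyneg : y < 0 := by
        rcases hy.lt_or_eq with h' | h'
        · exact h'
        · simp [h'] at h; exact absurd hL (not_le.2 h)
      rw [Real.sign_of_neg hyneg]
      have : y < -L := by
        rw [abs_of_nonpos hy] at h; linarith
      rw [min_eq_right (by linarith : y ≤ L), max_eq_left (le_of_lt this)]
      ring
    · rw [Real.sign_of_pos hy]
      have : L < y := by rw [abs_of_pos hy] at h; exact h
      rw [min_eq_left this.le, max_eq_right (by linarith : -L ≤ L)]
      ring

lemma sat_continuous {L : ℝ} (hL : 0 ≤ L) : Continuous (sat L) := by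
  have : sat L = fun y => max (-L) (min L y) := funext (sat_eq_clamp hL)
  rw [this]
  exact continuous_const.max (continuous_const.min continuous_id)

lemma sat_abs_le {L : ℝ} (hL : 0 ≤ L) (y : ℝ) : |sat L y| ≤ L := by
  rw [sat_eq_clamp hL, abs_le]
  constructor
  · exact le_max_left _ _
  · exact max_le (by linarith) (min_le_left _ _)

lemma sat_lipschitz {L : ℝ} (hL : 0 ≤ L) (a b : ℝ) : |sat L a - sat L b| ≤ |a - b| := by
  rw [sat_eq_clamp hL, sat_eq_clamp hL]
  calc |max (-L) (min L a) - max (-L) (min L b)| ≤ |min L a - min L b| := by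
        rw [max_comm (-L) (min L a), max_comm (-L) (min L b)]
        exact abs_max_sub_max_le_abs _ _ _
    _ ≤ |a - b| := by
        calc |min L a - min L b| ≤ max |L - L| |a - b| := abs_min_sub_min_le_max L a L b
          _ = |a - b| := by simp

lemma sat_nonneg {L : ℝ} (hL : 0 ≤ L) {y : ℝ} (hy : 0 ≤ y) : 0 ≤ sat L y := by
  rw [sat_eq_clamp hL]
  exact le_max_of_le_right (le_min hL hy)

lemma sat_nonpos {L : ℝ} (hL : 0 ≤ L) {y : ℝ} (hy : y ≤ 0) : sat L y ≤ 0 := by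
  rw [sat_eq_clamp hL]
  exact max_le (by linarith) (min_le_of_right_le hy)

lemma sat_eq_self_of_abs_lt {L y : ℝ} (hL : 0 < L) (h : |sat L y| < L) : sat L y = y := by
  by_cases hy : |y| ≤ L
  · exact if_pos hy
  · exfalso
    push_neg at hy
    have hy0 : y ≠ 0 := by
      intro h0; rw [h0] at hy; simp at hy; linarith
    have hsy : sat L y = L * Real.sign y := if_neg (not_le.2 hy)
    rcases lt_trichotomy y 0 with h' | h' | h'
    · rw [hsy, Real.sign_of_neg h'] at h
      rw [abs_mul] at h
      simp [abs_of_pos hL] at h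
    · exact hy0 h'
    · rw [hsy, Real.sign_of_pos h'] at h
      rw [abs_mul] at h
      simp [abs_of_pos hL] at h

/-- growth lemma: if derivative is at least `c` on `[a,b]` then `f b ≥ f a + c (b-a)`. -/
lemma growth {f f' : ℝ → ℝ} {a b c : ℝ} (hab : a ≤ b)
    (hf : ∀ t ∈ Icc a b, HasDerivAt f (f' t) t)
    (hc : ∀ t ∈ Icc a b, c ≤ f' t) : f a + c * (b - a) ≤ f b := by
  set g : ℝ → ℝ := fun t => f t - c * t with hg
  have hmono : MonotoneOn g (Icc a b) := by
    apply monotoneOn_of_deriv_nonneg (convex_Icc a b)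
    · exact ContinuousOn.sub (fun t ht => ((hf t ht).continuousAt).continuousWithinAt)
        (by fun_prop)
    · intro t ht
      have ht' : t ∈ Icc a b := interior_subset ht
      exact (((hf t ht').sub ((hasDerivAt_id t).const_mul c)).differentiableAt).differentiableWithinAt
    · intro t ht
      have ht' : t ∈ Icc a b := interior_subset ht
      have hd : HasDerivAt g (f' t - c) t := by
        have h := (hf t ht').sub (((hasDerivAt_id t).const_mul c))
        rw [mul_one] at h
        exact h
      rw [hd.deriv]
      have := hc t ht'
      linarith
  have := hmono (left_mem_Icc.2 hab) (right_mem_Icc.2 hab) hab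
  simp only [hg] at this
  linarith

noncomputable def Phi (L y : ℝ) : ℝ := ∫ u in (0:ℝ)..y, sat L u

lemma Phi_hasDerivAt {L : ℝ} (hL : 0 ≤ L) (y : ℝ) : HasDerivAt (Phi L) (sat L y) y :=
  intervalIntegral.integral_hasDerivAt_right
    ((sat_continuous hL).intervalIntegrable _ _)
    ((sat_continuous hL).stronglyMeasurable.stronglyMeasurableAtFilter)
    (sat_continuous hL).continuousAt

lemma Phi_zero (L : ℝ) : Phi L 0 = 0 := intervalIntegral.integral_same

lemma Phi_nonneg {L : ℝ} (hL : 0 ≤ L) (y : ℝ) : 0 ≤ Phi L y := by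
  rcases le_total 0 y with hy | hy
  · exact intervalIntegral.integral_nonneg hy (fun u hu => sat_nonneg hL hu.1)
  · unfold Phi
    rw [intervalIntegral.integral_symm]
    have : (∫ u in y..(0:ℝ), sat L u) ≤ 0 := by
      have := intervalIntegral.integral_nonneg (f := fun u => -sat L u)
        (μ := MeasureTheory.volume) hy (fun u hu => neg_nonneg.2 (sat_nonpos hL hu.2))
      rw [intervalIntegral.integral_neg] at this
      linarith
    linarith

lemma Phi_continuous {L : ℝ} (hL : 0 ≤ L) : Continuous (Phi L) :=
  continuous_iff_continuousAt.2 fun y => (Phi_hasDerivAt hL y).continuousAt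

set_option maxHeartbeats 2000000 in
theorem saturated_double_integrator_GAS (I kp kd L : ℝ)
    (hI : 0 < I) (hkp : 0 < kp) (hkd : 0 < kd) (hL : 0 < L)
    (x1 x2 : ℝ → ℝ)
    (h1 : ∀ t : ℝ, 0 ≤ t → HasDerivAt x1 (x2 t) t)
    (h2 : ∀ t : ℝ, 0 ≤ t → HasDerivAt x2 (-(sat L (kp * x1 t + kd * x2 t)) / I) t) :
    Filter.Tendsto x1 Filter.atTop (nhds 0) ∧ Filter.Tendsto x2 Filter.atTop (nhds 0) := by
  obtain ⟨s, hs⟩ : ∃ s : ℝ → ℝ, ∀ t, s t = kp * x1 t + kd * x2 t := ⟨_, fun _ => rfl⟩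
  obtain ⟨g, hg⟩ : ∃ g : ℝ → ℝ, ∀ t, g t = sat L (s t) := ⟨_, fun _ => rfl⟩
  obtain ⟨V, hV⟩ : ∃ V : ℝ → ℝ, ∀ t, V t = Phi L (s t) + (kp * I / 2) * (x2 t) ^ 2 :=
    ⟨_, fun _ => rfl⟩
  have hsfun : s = fun t => kp * x1 t + kd * x2 t := funext hs
  have hgfun : g = fun t => sat L (s t) := funext hg
  have hVfun : V = fun t => Phi L (s t) + (kp * I / 2) * (x2 t) ^ 2 := funext hV
  have hI0 : I ≠ 0 := ne_of_gt hI
  -- rewritten dynamics for x2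
  have h2' : ∀ t : ℝ, 0 ≤ t → HasDerivAt x2 (-(g t) / I) t := by
    intro t ht
    rw [hg t, hs t]
    exact h2 t ht
  -- derivative of s
  have hsd : ∀ t : ℝ, 0 ≤ t → HasDerivAt s (kp * x2 t + kd * (-(g t) / I)) t := by
    intro t ht
    rw [hsfun]
    exact ((h1 t ht).const_mul kp).add ((h2' t ht).const_mul kd)
  -- derivative of V
  have hVd : ∀ t : ℝ, 0 ≤ t → HasDerivAt V (-(kd / I) * (g t) ^ 2) t := by
    intro t ht
    rw [hVfun]
    have hphi : HasDerivAt (fun u => Phi L (s u))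
        (g t * (kp * x2 t + kd * (-(g t) / I))) t := by
      have := (Phi_hasDerivAt hL.le (s t)).comp t (hsd t ht)
      rw [← hg t] at this
      exact this
    have hsq : HasDerivAt (fun u => (kp * I / 2) * (x2 u) ^ 2)
        ((kp * I / 2) * (2 * x2 t ^ 1 * (-(g t) / I))) t :=
      ((h2' t ht).pow 2).const_mul (kp * I / 2)
    have hsum := hphi.add hsq
    convert hsum using 1
    · rfl
    · rfl
    · rfl
    field_simp
    ring
  -- V is antitone on [0, ∞)
  have hVanti : AntitoneOn V (Ici 0) := by
    apply antitoneOn_of_deriv_nonpos (convex_Ici 0)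
    · exact fun t ht => ((hVd t ht).continuousAt).continuousWithinAt
    · intro t ht
      rw [interior_Ici] at ht
      exact ((hVd t (le_of_lt ht)).differentiableAt).differentiableWithinAt
    · intro t ht
      rw [interior_Ici] at ht
      rw [(hVd t (le_of_lt ht)).deriv]
      have h0 : 0 ≤ (g t) ^ 2 := sq_nonneg _
      have hkdI : 0 ≤ kd / I := le_of_lt (div_pos hkd hI)
      nlinarith
  -- V is nonnegative
  have hVnn : ∀ t : ℝ, 0 ≤ V t := by
    intro t
    have h1' := Phi_nonneg hL.le (s t)
    have h2'' : 0 ≤ (kp * I / 2) * (x2 t) ^ 2 := mul_nonneg (by positivity) (sq_nonneg _)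
    rw [hV t]; linarith
  -- bound on x2
  obtain ⟨B, hB⟩ : ∃ B : ℝ, B = Real.sqrt (2 * V 0 / (kp * I)) := ⟨_, rfl⟩
  have hBnn : 0 ≤ B := hB ▸ Real.sqrt_nonneg _
  have hx2sq_le : ∀ t : ℝ, 0 ≤ t → (x2 t) ^ 2 ≤ 2 * V 0 / (kp * I) := by
    intro t ht
    have hVle : V t ≤ V 0 := hVanti (self_mem_Ici) ht ht
    have h1' := Phi_nonneg hL.le (s t)
    rw [le_div_iff₀ (by positivity : (0:ℝ) < kp * I)]
    linarith [hV t, hVle, h1']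
  have hx2B : ∀ t : ℝ, 0 ≤ t → |x2 t| ≤ B := by
    intro t ht
    rw [hB, ← Real.sqrt_sq_eq_abs]
    exact Real.sqrt_le_sqrt (hx2sq_le t ht)
  -- Lipschitz bound for s
  obtain ⟨M, hM⟩ : ∃ M : ℝ, M = kp * B + kd * L / I := ⟨_, rfl⟩
  have hMnn : 0 ≤ M := by rw [hM]; positivity
  have hsd_bound : ∀ t : ℝ, 0 ≤ t → |kp * x2 t + kd * (-(g t) / I)| ≤ M := by
    intro t ht
    have h1' := hx2B t ht
    have h2'' : |g t| ≤ L := hg t ▸ sat_abs_le hL.le (s t)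
    rw [hM]
    calc |kp * x2 t + kd * (-(g t) / I)| ≤ |kp * x2 t| + |kd * (-(g t) / I)| := abs_add_le _ _
      _ = kp * |x2 t| + kd * |g t| / I := by
          rw [abs_mul, abs_mul, abs_of_pos hkp, abs_of_pos hkd, abs_div, abs_neg,
            abs_of_pos hI, mul_div_assoc]
      _ ≤ kp * B + kd * L / I := by
          have h3 : kd * |g t| / I ≤ kd * L / I := by gcongr
          nlinarith [mul_le_mul_of_nonneg_left h1' hkp.le]
  have hsLip : ∀ a b : ℝ, 0 ≤ a → a ≤ b → |s b - s a| ≤ M * (b - a) := by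
    intro a b ha hab
    have hIcc : ∀ t ∈ Icc a b, (0:ℝ) ≤ t := fun t ht => le_trans ha ht.1
    rw [abs_le]
    constructor
    · have hgr : s a + -M * (b - a) ≤ s b := growth (f := s)
        (f' := fun t => kp * x2 t + kd * (-(g t) / I)) (c := -M) hab
        (fun t ht => hsd t (hIcc t ht))
        (fun t ht => neg_le_of_abs_le (hsd_bound t (hIcc t ht)))
      linarith
    · have hgr : -s a + -M * (b - a) ≤ -s b := growth (f := fun t => -s t)
        (f' := fun t => -(kp * x2 t + kd * (-(g t) / I))) (c := -M) hab
        (fun t ht => (hsd t (hIcc t ht)).neg)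
        (fun t ht => by
          have h' := hsd_bound t (hIcc t ht)
          rw [abs_le] at h'
          linarith [h'.2])
      linarith
  -- limit of V
  obtain ⟨W, hW⟩ : ∃ W : ℝ → ℝ, ∀ t, W t = V (max t 0) := ⟨_, fun _ => rfl⟩
  have hWanti : Antitone W := by
    intro a b hab
    rw [hW a, hW b]
    exact hVanti (le_max_right a 0) (le_max_right b 0) (max_le_max hab le_rfl)
  have hWbdd : BddBelow (range W) := ⟨0, fun y ⟨t, ht⟩ => ht ▸ (hW t ▸ hVnn _)⟩
  obtain ⟨c, hc⟩ : ∃ c : ℝ, c = ⨅ t, W t := ⟨_, rfl⟩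
  have hWtend : Tendsto W atTop (nhds c) := hc ▸ tendsto_atTop_ciInf hWanti hWbdd
  have hVtend : Tendsto V atTop (nhds c) := by
    apply hWtend.congr'
    filter_upwards [eventually_ge_atTop (0:ℝ)] with t ht
    rw [hW t, max_eq_left ht]
  have hVgec : ∀ t : ℝ, 0 ≤ t → c ≤ V t := by
    intro t ht
    have h' : c ≤ W t := hc ▸ ciInf_le hWbdd t
    rwa [hW t, max_eq_left ht] at h'
  -- Barbalat-type step: g² → 0
  obtain ⟨K, hK⟩ : ∃ K : ℝ, K = 2 * L * M + 1 := ⟨_, rfl⟩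
  have hKpos : 0 < K := by rw [hK]; positivity
  have hg2 : Tendsto (fun t => (g t) ^ 2) atTop (nhds 0) := by
    by_contra hcon
    rw [Metric.tendsto_atTop] at hcon
    push_neg at hcon
    obtain ⟨ε, hε, hfreq⟩ := hcon
    obtain ⟨δ, hδdef⟩ : ∃ δ : ℝ, δ = ε / (2 * K) := ⟨_, rfl⟩
    have hδ : 0 < δ := by rw [hδdef]; positivity
    obtain ⟨β, hβdef⟩ : ∃ β : ℝ, β = kd / I * (ε / 2) := ⟨_, rfl⟩
    have hβ : 0 < β := by rw [hβdef]; positivity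
    have hKδ : K * δ = ε / 2 := by rw [hδdef]; field_simp
    obtain ⟨N, hN⟩ := (Metric.tendsto_atTop.1 hVtend) (β * δ) (by positivity)
    obtain ⟨t₀, ht₀N, ht₀d⟩ := hfreq (max N 0)
    have hgt₀ : ε ≤ (g t₀) ^ 2 := by
      rwa [Real.dist_eq, sub_zero, abs_of_nonneg (sq_nonneg _)] at ht₀d
    have ht₀0 : 0 ≤ t₀ := le_trans (le_max_right N 0) ht₀N
    -- on [t₀, t₀+δ], g² ≥ ε/2
    have hlow : ∀ u ∈ Icc t₀ (t₀ + δ), ε / 2 ≤ (g u) ^ 2 := by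
      intro u hu
      have h0u : 0 ≤ u := le_trans ht₀0 hu.1
      have hdist : |s u - s t₀| ≤ M * (u - t₀) := hsLip t₀ u ht₀0 hu.1
      have hgd : |g u - g t₀| ≤ M * (u - t₀) := by
        rw [hg u, hg t₀]
        exact le_trans (sat_lipschitz hL.le _ _) hdist
      have hgsum : |g u + g t₀| ≤ 2 * L := by
        have := sat_abs_le hL.le (s u)
        have := sat_abs_le hL.le (s t₀)
        calc |g u + g t₀| ≤ |g u| + |g t₀| := abs_add_le _ _
          _ ≤ 2 * L := by rw [hg u, hg t₀]; linarith [sat_abs_le hL.le (s u), sat_abs_le hL.le (s t₀)]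
      have hdiff : |(g u) ^ 2 - (g t₀) ^ 2| ≤ K * (u - t₀) := by
        have heq : (g u) ^ 2 - (g t₀) ^ 2 = (g u - g t₀) * (g u + g t₀) := by ring
        rw [heq, abs_mul]
        calc |g u - g t₀| * |g u + g t₀| ≤ (M * (u - t₀)) * (2 * L) :=
              mul_le_mul hgd hgsum (abs_nonneg _) (by nlinarith [hu.1])
          _ ≤ K * (u - t₀) := by rw [hK]; nlinarith [hu.1, hMnn, hL.le]
      have hub : K * (u - t₀) ≤ K * δ := by
        have : u - t₀ ≤ δ := by linarith [hu.2]
        nlinarith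
      have habs := abs_le.1 hdiff
      linarith [habs.1, hKδ, hgt₀]
    -- V decreases by at least βδ over [t₀, t₀+δ]
    have hdec : V (t₀ + δ) ≤ V t₀ - β * δ := by
      have hgr : -V t₀ + β * (t₀ + δ - t₀) ≤ -V (t₀ + δ) := by
        refine growth (f := fun t => -V t) (f' := fun t => (kd / I) * (g t) ^ 2) (c := β)
          (by linarith) (fun u hu => ?_) (fun u hu => ?_)
        · have := (hVd u (le_trans ht₀0 hu.1)).neg
          exact this.congr_deriv (by ring)
        · have hl := hlow u hu
          rw [hβdef]
          have hkdI : 0 < kd / I := div_pos hkd hI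
          nlinarith
      have : t₀ + δ - t₀ = δ := by ring
      rw [this] at hgr
      linarith
    have hge := hVgec (t₀ + δ) (by linarith)
    have hNt₀ := hN t₀ (le_trans (le_max_left N 0) ht₀N)
    rw [Real.dist_eq] at hNt₀
    have := (abs_lt.1 hNt₀).2
    linarith
  -- g → 0
  have hgabs : Tendsto (fun t => |g t|) atTop (nhds 0) := by
    have h' := (Real.continuous_sqrt.tendsto 0).comp hg2
    simp only [Real.sqrt_zero] at h'
    apply h'.congr
    intro t
    simp [Function.comp, Real.sqrt_sq_eq_abs]
  have hg0 : Tendsto g atTop (nhds 0) := (tendsto_zero_iff_abs_tendsto_zero g).2 hgabs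
  -- s → 0
  have hs0 : Tendsto s atTop (nhds 0) := by
    apply hg0.congr'
    filter_upwards [hgabs.eventually (gt_mem_nhds hL)] with t ht
    rw [hg t]
    apply sat_eq_self_of_abs_lt hL
    rw [← hg t]
    exact ht
  -- Phi(s) → 0
  have hPhis : Tendsto (fun t => Phi L (s t)) atTop (nhds 0) := by
    have h' := ((Phi_continuous hL.le).tendsto 0).comp hs0
    rw [Phi_zero] at h'
    exact h'.congr (fun t => rfl)
  -- x2² → q
  obtain ⟨q, hq⟩ : ∃ q : ℝ, q = c * (2 / (kp * I)) := ⟨_, rfl⟩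
  have hx2q : Tendsto (fun t => (x2 t) ^ 2) atTop (nhds q) := by
    have h' := (hVtend.sub hPhis).mul_const (2 / (kp * I))
    rw [sub_zero, ← hq] at h'
    apply h'.congr
    intro t
    rw [hV t]
    field_simp
    ring
  have hq0 : 0 ≤ q := ge_of_tendsto hx2q (Eventually.of_forall fun t => sq_nonneg _)
  -- q = 0
  have hqzero : q = 0 := by
    by_contra hqne
    have hqpos : 0 < q := lt_of_le_of_ne hq0 (Ne.symm hqne)
    obtain ⟨C, hC⟩ : ∃ C : ℝ, C = (1 + kd * B) / kp + 1 := ⟨_, rfl⟩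
    have hCpos : 0 < C := by rw [hC]; positivity
    have hsabs : Tendsto (fun t => |s t|) atTop (nhds 0) := by
      simpa using hs0.abs
    have hsb : ∀ᶠ t in atTop, |s t| ≤ 1 := by
      filter_upwards [hsabs.eventually (gt_mem_nhds one_pos)] with t ht
      exact ht.le
    have hx1b : ∀ᶠ t in atTop, |x1 t| ≤ C := by
      filter_upwards [hsb, eventually_ge_atTop (0:ℝ)] with t hst ht0
      have hb2 := hx2B t ht0
      have hx1eq : x1 t = (s t - kd * x2 t) / kp := by
        rw [hs t]
        field_simp
        ring
      rw [hx1eq, abs_div, abs_of_pos hkp, div_le_iff₀ hkp, hC]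
      have habs : |s t - kd * x2 t| ≤ |s t| + kd * |x2 t| := by
        calc |s t - kd * x2 t| ≤ |s t| + |kd * x2 t| := abs_sub _ _
          _ = |s t| + kd * |x2 t| := by rw [abs_mul, abs_of_pos hkd]
      have hkdB : kd * |x2 t| ≤ kd * B := by nlinarith
      have hexp : ((1 + kd * B) / kp + 1) * kp = 1 + kd * B + kp := by
        field_simp
      linarith
    have hgsmall : ∀ᶠ t in atTop, |g t| ≤ I * q / (4 * C) := by
      filter_upwards [hgabs.eventually (gt_mem_nhds (by positivity : (0:ℝ) < I * q / (4 * C)))]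
        with t ht
      exact le_of_lt ht
    have hx2big : ∀ᶠ t in atTop, q / 2 < (x2 t) ^ 2 :=
      hx2q.eventually (lt_mem_nhds (by linarith : q / 2 < q))
    obtain ⟨T₁, hT₁⟩ := eventually_atTop.1
      (((hx1b.and hgsmall).and hx2big).and (eventually_ge_atTop (0:ℝ)))
    obtain ⟨T, hT, hT0⟩ : ∃ T : ℝ,
        (∀ u ≥ T, ((|x1 u| ≤ C ∧ |g u| ≤ I * q / (4 * C)) ∧ q / 2 < x2 u ^ 2) ∧ 0 ≤ u) ∧
        0 ≤ T :=
      ⟨max T₁ 0, fun u hu => hT₁ u (le_trans (le_max_left _ _) hu), le_max_right _ _⟩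
    -- p = x1 * x2 grows without bound, contradiction
    obtain ⟨p, hp⟩ : ∃ p : ℝ → ℝ, ∀ t, p t = x1 t * x2 t := ⟨_, fun _ => rfl⟩
    have hpfun : p = fun t => x1 t * x2 t := funext hp
    obtain ⟨b, hbdef⟩ : ∃ b : ℝ, b = T + (C * B + |p T| + 1) / (q / 4) := ⟨_, rfl⟩
    have hbT : T ≤ b := by
      rw [hbdef]
      have : 0 ≤ (C * B + |p T| + 1) / (q / 4) := by positivity
      linarith
    have hpgr : p T + (q / 4) * (b - T) ≤ p b := by
      refine growth (f := p) (f' := fun t => x2 t * x2 t + x1 t * (-(g t) / I)) (c := q / 4)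
        hbT (fun u hu => ?_) (fun u hu => ?_)
      · rw [hpfun]
        exact (h1 u (le_trans hT0 hu.1)).mul (h2' u (le_trans hT0 hu.1))
      · obtain ⟨⟨⟨hx1u, hgu⟩, hx2u⟩, hu0⟩ := hT u hu.1
        have hterm : |x1 u * (-(g u) / I)| ≤ q / 4 := by
          rw [abs_mul, abs_div, abs_neg, abs_of_pos hI]
          have hstep : |x1 u| * (|g u| / I) ≤ C * ((I * q / (4 * C)) / I) := by
            apply mul_le_mul hx1u _ (by positivity) hCpos.le
            gcongr
          have heq2 : C * ((I * q / (4 * C)) / I) = q / 4 := by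
            field_simp
          linarith
        have hsq : x2 u * x2 u = (x2 u) ^ 2 := by ring
        have := abs_le.1 hterm
        nlinarith [hx2u]
    have hqb : (q / 4) * (b - T) = C * B + |p T| + 1 := by
      rw [hbdef]
      field_simp
      ring
    have hpb : p b ≤ C * B := by
      obtain ⟨⟨⟨hx1b', _⟩, _⟩, hb0⟩ := hT b hbT
      have hb2 := hx2B b hb0
      rw [hp b]
      calc x1 b * x2 b ≤ |x1 b * x2 b| := le_abs_self _
        _ = |x1 b| * |x2 b| := abs_mul _ _
        _ ≤ C * B := mul_le_mul hx1b' hb2 (abs_nonneg _) hCpos.le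
    have hpT : -|p T| ≤ p T := neg_abs_le _
    linarith
  -- conclude
  rw [hqzero] at hx2q
  have hx2abs : Tendsto (fun t => |x2 t|) atTop (nhds 0) := by
    have h' := (Real.continuous_sqrt.tendsto 0).comp hx2q
    simp only [Real.sqrt_zero] at h'
    apply h'.congr
    intro t
    simp [Function.comp, Real.sqrt_sq_eq_abs]
  have hx2lim : Tendsto x2 atTop (nhds 0) := (tendsto_zero_iff_abs_tendsto_zero x2).2 hx2abs
  have hx1lim : Tendsto x1 atTop (nhds 0) := by
    have h' := (hs0.sub (hx2lim.const_mul kd)).const_mul (1 / kp)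
    simp only [mul_zero, sub_zero, mul_zero] at h'
    apply h'.congr
    intro t
    rw [hs t]
    field_simp
    ring
  exact ⟨hx1lim, hx2lim⟩
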